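/- Let γ: ℝ → ℝ^3 be the rational normal curve γ(t) = (6t^2 - 1, (7/2)t^3 + (3/2)t, -(1/2)t^3 + (3/2)t), and for each t let ℓ(t) denote the tangent line {γ(t) + r·γ'(t) : r ∈ ℝ} to γ at γ(t). Then for each u ∈ {-1, 0, 1}, every point (x,y,z) of the tangent line ℓ(u) satisfies x^2 - y^2 + z^2 = 1; that is, the three tangent lines ℓ(-1), ℓ(0), ℓ(1) are contained in the quadric surface Q = {(x,y,z) ∈ ℝ^3 : x^2 - y^2 + z^2 = 1}. -/

import Mathlib

lemma rnc_hasDerivAt (u : ℝ) :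
    HasDerivAt (fun t : ℝ =>
      ((6 * t ^ 2 - 1, 7 / 2 * t ^ 3 + 3 / 2 * t, -(1 / 2) * t ^ 3 + 3 / 2 * t) : ℝ × ℝ × ℝ))
      (12 * u, 21 / 2 * u ^ 2 + 3 / 2, -(3 / 2) * u ^ 2 + 3 / 2) u := by
  have h1 : HasDerivAt (fun t : ℝ => 6 * t ^ 2 - 1) (12 * u) u := by
    have := ((hasDerivAt_pow 2 u).const_mul 6).sub_const 1
    simpa using this.congr_deriv (by ring)
  have h2 : HasDerivAt (fun t : ℝ => 7 / 2 * t ^ 3 + 3 / 2 * t) (21 / 2 * u ^ 2 + 3 / 2) u := by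
    have := ((hasDerivAt_pow 3 u).const_mul (7/2)).add ((hasDerivAt_id u).const_mul (3/2))
    simpa [Pi.add_def] using this.congr_deriv (by ring)
  have h3 : HasDerivAt (fun t : ℝ => -(1 / 2) * t ^ 3 + 3 / 2 * t) (-(3 / 2) * u ^ 2 + 3 / 2) u := by
    have := ((hasDerivAt_pow 3 u).const_mul (-(1/2))).add ((hasDerivAt_id u).const_mul (3/2))
    simpa [Pi.add_def] using this.congr_deriv (by ring)
  exact h1.prodMk (h2.prodMk h3)

/-- For the rational normal cubic
`γ(t) = (6t² - 1, (7/2)t³ + (3/2)t, -(1/2)t³ + (3/2)t)`, the tangent lines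
`ℓ(u) = {γ(u) + r·γ'(u)}` at `u ∈ {-1, 0, 1}` are contained in the quadric
`Q = {x² - y² + z² = 1}`. -/
theorem three_tangent_lines_in_quadric (γ : ℝ → ℝ × ℝ × ℝ)
    (hγ : ∀ t : ℝ, γ t =
      (6 * t ^ 2 - 1, 7 / 2 * t ^ 3 + 3 / 2 * t, -(1 / 2) * t ^ 3 + 3 / 2 * t)) :
    ∀ u ∈ ({-1, 0, 1} : Set ℝ), ∀ r : ℝ,
      (γ u + r • deriv γ u).1 ^ 2 - (γ u + r • deriv γ u).2.1 ^ 2 +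
        (γ u + r • deriv γ u).2.2 ^ 2 = 1 := by
  have hfe : γ = fun t : ℝ =>
      ((6 * t ^ 2 - 1, 7 / 2 * t ^ 3 + 3 / 2 * t, -(1 / 2) * t ^ 3 + 3 / 2 * t) : ℝ × ℝ × ℝ) :=
    funext hγ
  subst hfe
  intro u hu r
  rw [(rnc_hasDerivAt u).deriv]
  rcases hu with h | h | h <;> subst h <;>
    simp [Prod.fst, Prod.snd, Prod.smul_mk, Prod.mk_add_mk] <;> ring
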